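/- The Approximate-Fan Theorem, classical form (the restricted AppFT of Section 12; constructively the conclusion is that the thin bar is almost-finite): let S : List ℕ → Bool be a spread-law that is an explicit approximate fan-law, i.e. there exists g : ℕ → ℕ such that for every n there is no injective f : Fin (g n) → List ℕ with (f i).length = n and S (f i) = true for all i. If A : List ℕ → Bool is a thin bar in F_S, then the set {t : List ℕ | A t = true} is finite. -/

import Mathlib

/-- The first `n` values of `α` as a list. -/
def segN (α : ℕ → ℕ) (n : ℕ) : List ℕ := List.ofFn fun i : Fin n => α i

/-- `S` is a spread-law. -/
def SpreadLaw (S : List ℕ → Bool) : Prop :=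
  ∀ s : List ℕ, S s = true ↔ ∃ m, S (s ++ [m]) = true

/-- `A` is a thin bar in the spread `F_S`. -/
def ThinBar (S A : List ℕ → Bool) : Prop :=
  (∀ t, A t = true → S t = true) ∧
  (∀ t u, A t = true → A u = true → t <+: u → t = u) ∧
  (∀ α : ℕ → ℕ, (∀ n, S (segN α n) = true) → ∃ n, A (segN α n) = true)

/-- The Approximate-Fan Theorem, classical form (the restricted AppFT of Section 12):
in an explicit approximate fan, every thin bar is finite. -/
theorem approximate_fan_theorem (S : List ℕ → Bool)
    (hspread : SpreadLaw S)
    (happ : ∃ g : ℕ → ℕ, ∀ n : ℕ,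
      ¬ ∃ f : Fin (g n) → List ℕ, Function.Injective f ∧
        ∀ i, (f i).length = n ∧ S (f i) = true)
    (A : List ℕ → Bool) (hbar : ThinBar S A) :
    {t : List ℕ | A t = true}.Finite := by
  classical
  obtain ⟨g, hg⟩ := happ
  obtain ⟨hAS, hthin, hbarr⟩ := hbar
  -- S is closed under taking prefixes
  have hstep : ∀ s m, S (s ++ [m]) = true → S s = true := fun s m h => (hspread s).mpr ⟨m, h⟩
  have htake : ∀ t, S t = true → ∀ n, S (t.take n) = true := by
    intro t
    induction t using List.reverseRecOn with
    | nil => intro h n; simpa using h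
    | append_singleton s m ih =>
      intro h n
      rcases le_or_gt n s.length with hn | hn
      · rw [List.take_append_of_le_length hn]
        exact ih (hstep s m h) n
      · rw [List.take_of_length_le (by simpa using hn)]
        exact h
  have hpre : ∀ t, S t = true → ∀ u, u <+: t → S u = true := by
    intro t ht u hu
    have h2 := htake t ht u.length
    rw [← List.prefix_iff_eq_take.mp hu] at h2
    exact h2
  -- each level of S-true lists is finite
  have hlev : ∀ n, {t : List ℕ | S t = true ∧ t.length = n}.Finite := by
    intro n
    by_contra hfin
    have hfin : {t : List ℕ | S t = true ∧ t.length = n}.Infinite := hfin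
    obtain ⟨F, hF, hcard⟩ := hfin.exists_subset_card_eq (g n)
    refine hg n ⟨fun i => ((F.equivFinOfCardEq hcard).symm i : List ℕ), ?_, ?_⟩
    · intro i j hij
      exact (F.equivFinOfCardEq hcard).symm.injective (Subtype.ext hij)
    · intro i
      have hm := hF ((F.equivFinOfCardEq hcard).symm i).2
      exact ⟨hm.2, hm.1⟩
  -- the tree T of S-true nodes with no proper prefix in A
  set T : List ℕ → Prop := fun s => S s = true ∧ ∀ u, u <+: s → u ≠ s → A u ≠ true with hT
  have hTpre : ∀ t, T t → ∀ u, u <+: t → T u := by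
    rintro t ⟨ht1, ht2⟩ u hu
    refine ⟨hpre t ht1 u hu, fun v hv hvne => ht2 v (hv.trans hu) ?_⟩
    rintro rfl
    exact hvne (hv.eq_of_length (hv.length_le.antisymm hu.length_le))
  have hTA : ∀ t, A t = true → T t := by
    intro t ht
    refine ⟨hAS t ht, fun u hu hune hAu => hune (hthin u t hAu ht hu)⟩
  -- "infinitely far extendable within T"
  set Inf : List ℕ → Prop := fun s => ∀ n, ∃ t, T t ∧ s <+: t ∧ n ≤ t.length with hInf
  by_contra hfin
  have hfin : {t : List ℕ | A t = true}.Infinite := hfin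
  -- A has elements of unbounded length, hence Inf []
  have hunb : ∀ n, ∃ t, A t = true ∧ n ≤ t.length := by
    intro n
    by_contra hc
    push_neg at hc
    apply hfin
    apply Set.Finite.subset (Set.Finite.biUnion (Set.finite_Iio n)
      (fun k _ => hlev k))
    intro t ht
    exact Set.mem_biUnion (hc t ht) ⟨hAS t ht, rfl⟩
  have hInfnil : Inf [] := by
    intro n
    obtain ⟨t, ht, hlen⟩ := hunb n
    exact ⟨t, hTA t ht, List.nil_prefix, hlen⟩
  -- König step: an Inf node has an Inf child
  have hkonig : ∀ s, T s → Inf s → ∃ t, T t ∧ Inf t ∧ t.length = s.length + 1 ∧ s <+: t := by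
    intro s hTs hInfs
    -- witnesses of each length
    have hw : ∀ n : ℕ, ∃ t, T t ∧ s <+: t ∧ s.length + 1 + n ≤ t.length := fun n =>
      hInfs (s.length + 1 + n)
    choose w hw1 hw2 hw3 using hw
    -- child of s determined by witness n
    set c : ℕ → List ℕ := fun n => (w n).take (s.length + 1) with hc
    have hcT : ∀ n, T (c n) := fun n => hTpre (w n) (hw1 n) _ (List.take_prefix _ _)
    have hclen : ∀ n, (c n).length = s.length + 1 := by
      intro n
      simp only [hc, List.length_take]
      exact min_eq_left (le_trans (Nat.le_add_right _ _) (hw3 n))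
    have hcs : ∀ n, s <+: c n := by
      intro n
      have h1 : s = (w n).take s.length := List.prefix_iff_eq_take.mp (hw2 n)
      rw [hc]
      simp only
      rw [List.prefix_iff_eq_take, List.take_take, min_eq_left (Nat.le_succ _)]
      exact h1
    have hcw : ∀ n, c n <+: w n := fun n => List.take_prefix _ _
    -- the children form a finite set; some child has infinitely many witnesses
    have hfibers : ∃ d : List ℕ, {n | c n = d}.Infinite := by
      by_contra hfib
      push_neg at hfib
      have : (Set.univ : Set ℕ).Finite := by
        apply Set.Finite.subset (Set.Finite.biUnion
          (Set.Finite.subset (hlev (s.length + 1))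
            (fun d (hd : d ∈ Set.range c) => by
              obtain ⟨n, rfl⟩ := hd
              exact ⟨(hcT n).1, hclen n⟩) : (Set.range c).Finite)
          (fun d _ => hfib d))
        intro n _
        exact Set.mem_biUnion ⟨n, rfl⟩ rfl
      exact Set.infinite_univ this
    obtain ⟨d, hd⟩ := hfibers
    have hdn : ∃ n, c n = d := by
      obtain ⟨n, hn⟩ := hd.nonempty
      exact ⟨n, hn⟩
    obtain ⟨n₀, hn₀⟩ := hdn
    refine ⟨d, hn₀ ▸ hcT n₀, ?_, hn₀ ▸ hclen n₀, hn₀ ▸ hcs n₀⟩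
    -- d is Inf
    intro m
    obtain ⟨n, hn, hnm⟩ : ∃ n, c n = d ∧ m ≤ n := by
      by_contra hcon
      push_neg at hcon
      exact hd (Set.Finite.subset (Set.finite_Iio m) (fun x hx => hcon x hx))
    exact ⟨w n, hw1 n, hn ▸ hcw n, le_trans (le_trans hnm (by omega)) (hw3 n)⟩
  -- choice function for the next node
  have hnext : ∀ s, ∃ t, (T s ∧ Inf s) →
      T t ∧ Inf t ∧ t.length = s.length + 1 ∧ s <+: t := by
    intro s
    by_cases h : T s ∧ Inf s
    · obtain ⟨t, ht⟩ := hkonig s h.1 h.2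
      exact ⟨t, fun _ => ht⟩
    · exact ⟨[], fun h' => absurd h' h⟩
  choose next hnextspec using hnext
  set β : ℕ → List ℕ := fun n => next^[n] [] with hβ
  have hTnil : T [] := by
    obtain ⟨t, ht, -, -⟩ := hInfnil 0
    exact hTpre t ht [] List.nil_prefix
  have hβinv : ∀ n, T (β n) ∧ Inf (β n) ∧ (β n).length = n := by
    intro n
    induction n with
    | zero => exact ⟨hTnil, hInfnil, rfl⟩
    | succ k ih =>
      have hb : β (k + 1) = next (β k) := by
        rw [hβ]; simp [Function.iterate_succ_apply']
      obtain ⟨h1, h2, h3, _⟩ := hnextspec (β k) ⟨ih.1, ih.2.1⟩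
      exact ⟨hb ▸ h1, hb ▸ h2, by rw [hb, h3, ih.2.2]⟩
  have hβpre : ∀ n, β n <+: β (n + 1) := by
    intro n
    have hb : β (n + 1) = next (β n) := by
      rw [hβ]; simp [Function.iterate_succ_apply']
    obtain ⟨-, -, -, h4⟩ := hnextspec (β n) ⟨(hβinv n).1, (hβinv n).2.1⟩
    exact hb ▸ h4
  -- the path α
  set α : ℕ → ℕ := fun n => (β (n + 1)).getD n 0 with hα
  have hseg : ∀ n, segN α n = β n := by
    intro n
    induction n with
    | zero =>
      simp [segN, hβ]
    | succ k ih =>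
      obtain ⟨v, hv⟩ := hβpre k
      have hlv : v.length = 1 := by
        have h1 := (hβinv k).2.2
        have h2 := (hβinv (k + 1)).2.2
        have := congrArg List.length hv
        simp [h1, h2] at this
        omega
      obtain ⟨a, rfl⟩ : ∃ a, v = [a] := by
        cases v with
        | nil => simp at hlv
        | cons x xs => cases xs with
          | nil => exact ⟨x, rfl⟩
          | cons y ys => simp at hlv
      have hαk : α k = a := by
        have hk : (β k).length = k := (hβinv k).2.2
        rw [hα]
        simp only
        rw [← hv, List.getD_append_right _ _ _ _ (le_of_eq hk), hk]
        simp
      have hss : segN α (k + 1) = segN α k ++ [α k] := by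
        show List.ofFn (fun i : Fin (k+1) => α i) = _
        rw [List.ofFn_succ']
        simp [segN, List.concat_eq_append, Fin.coe_castSucc, Fin.val_last]
      rw [hss, ih, hαk, hv]
  -- α is in the spread, so the bar hits it: contradiction with T
  have hαS : ∀ n, S (segN α n) = true := fun n => (hseg n) ▸ ((hβinv n).1).1
  obtain ⟨n, hAn⟩ := hbarr α hαS
  have hTn1 := (hβinv (n + 1)).1
  refine hTn1.2 (β n) (hβpre n) ?_ (hseg n ▸ hAn)
  intro h
  have := congrArg List.length h
  rw [(hβinv n).2.2, (hβinv (n + 1)).2.2] at this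
  omega
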